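/- Let (A_m)_{m≥1} be a sequence of 2×2 matrices with nonnegative integer entries such that A_m·(1,1)ᵗ = d_m·(1,1)ᵗ with integers d_m ≥ 2, and let (Λ_m)_{m≥1} be a sequence of vectors in ℤ² satisfying Λ_m = A_m·Λ_{m+1} for all m. Then it is impossible that both entries of Λ_m are strictly positive for every m. -/

import Mathlib

open Matrix

/-- The entries of `Λ m` cannot all stay strictly positive under
`Λ m = A m ⬝ Λ (m+1)` with nonnegative matrices of row sums `d m ≥ 2`. -/
theorem no_forever_positive_chern_vector
    (A : ℕ → Matrix (Fin 2) (Fin 2) ℤ) (d : ℕ → ℤ) (Λ : ℕ → Fin 2 → ℤ)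
    (hA : ∀ m i j, 0 ≤ A m i j)
    (hd : ∀ m, 2 ≤ d m)
    (hrow : ∀ m, (A m).mulVec ![1, 1] = ![d m, d m])
    (hΛ : ∀ m, Λ m = (A m).mulVec (Λ (m + 1))) :
    ¬ (∀ m i, 0 < Λ m i) := by
  intro hpos
  have key : ∀ m k i, (2 : ℤ) ^ m ≤ Λ k i := by
    intro m
    induction m with
    | zero => intro k i; rw [pow_zero]; exact hpos k i
    | succ m ih =>
      intro k i
      have hsum : A k i 0 + A k i 1 = d k := by
        have h := congrFun (hrow k) i
        fin_cases i <;>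
          simpa [mulVec, dotProduct, Fin.sum_univ_two] using h
      have e : Λ k i = A k i 0 * Λ (k + 1) 0 + A k i 1 * Λ (k + 1) 1 := by
        rw [hΛ k]
        simp [mulVec, dotProduct, Fin.sum_univ_two]
      rw [e]
      have hp : (0 : ℤ) < 2 ^ m := pow_pos two_pos m
      calc (2 : ℤ) ^ (m + 1) = 2 * 2 ^ m := by ring
        _ ≤ d k * 2 ^ m := by nlinarith [hd k]
        _ = A k i 0 * 2 ^ m + A k i 1 * 2 ^ m := by rw [← hsum]; ring
        _ ≤ A k i 0 * Λ (k + 1) 0 + A k i 1 * Λ (k + 1) 1 := by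
            gcongr
            exacts [hA k i 0, ih (k + 1) 0, hA k i 1, ih (k + 1) 1]
  obtain ⟨n, hn⟩ := pow_unbounded_of_one_lt (Λ 0 0) (one_lt_two : (1 : ℤ) < 2)
  exact absurd (key n 0 0) (not_le.2 hn)
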